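/- Let F be a probability distribution on [0,∞) with density f and monotone hazard rate h(x) = f(x)/(1 − F(x)), and let q ∈ (0,1) be a quantile. If x > 0 satisfies F^{-1}(q) ≤ x, then the hazard rate of F at x satisfies h(x) ≥ −ln(1 − q)/x. -/

import Mathlib

open MeasureTheory
open scoped ENNReal

noncomputable section

/-- A distribution `μ` on `[0,∞)` with density `f` has monotone hazard rate (MHR):
its hazard rate `h(x) = f(x)/(1 − F(x)) = f(x)/μ(x,∞)` is nondecreasing on the support of `μ`
(i.e. wherever the upper tail still has positive mass). -/
def IsMHR (f : ℝ → ℝ) (μ : Measure ℝ) : Prop :=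
  ∀ x y : ℝ, x ≤ y → μ (Set.Ioi y) ≠ 0 →
    f x / (μ (Set.Ioi x)).toReal ≤ f y / (μ (Set.Ioi y)).toReal

/-- `F⁻¹(q)`: the value of `μ` at quantile `q`, i.e. `min {v : F(v) ≥ q}`. -/
def quantileFn (μ : Measure ℝ) (q : ℝ) : ℝ :=
  sInf {v : ℝ | q ≤ (μ (Set.Iic v)).toReal}

/-- Let `μ` be a probability distribution on `[0,∞)` with density `f` and
monotone hazard rate `h(x) = f(x)/(1 − F(x))`, and let `q ∈ (0,1)` be a quantile. If `x > 0`
satisfies `F⁻¹(q) ≤ x` (and `x` is in the support, so that the hazard rate at `x` is defined),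
then `h(x) ≥ −ln(1−q)/x`. -/
theorem hazard_rate_lower_bound_from_quantile
    (f : ℝ → ℝ) (hf : ∀ t, 0 ≤ f t)
    (μ : Measure ℝ) (hdens : μ = volume.withDensity (fun t => ENNReal.ofReal (f t)))
    (hprob : IsProbabilityMeasure μ) (hnonneg : μ (Set.Iio 0) = 0)
    (hmhr : IsMHR f μ)
    (q : ℝ) (hq : q ∈ Set.Ioo (0 : ℝ) 1)
    (x : ℝ) (hx : 0 < x) (hquant : quantileFn μ q ≤ x) (hsupp : μ (Set.Ioi x) ≠ 0) :
    -Real.log (1 - q) / x ≤ f x / (μ (Set.Ioi x)).toReal := by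
  obtain ⟨hq0, hq1⟩ := hq
  have hac : μ ≪ volume := hdens ▸ withDensity_absolutelyContinuous _ _
  have huniv : μ Set.univ = 1 := hprob.measure_univ
  have hfin : ∀ s : Set ℝ, μ s ≠ ⊤ := fun s => measure_ne_top μ s
  set S : ℝ → ℝ := fun t => (μ (Set.Ioi t)).toReal with hSdef
  set h : ℝ := f x / S x with hhdef
  have hIic0 : μ (Set.Iic 0) = 0 := by
    have h1 : μ (Set.Iic 0) ≤ μ (Set.Iio 0) + μ {(0:ℝ)} := by
      rw [← Set.Iio_union_right]; exact measure_union_le _ _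
    have h2 : μ {(0:ℝ)} = 0 := hac Real.volume_singleton
    simpa [hnonneg, h2] using h1
  have hS0 : S 0 = 1 := by
    have hc := measure_add_measure_compl (μ := μ) (measurableSet_Iic (a := (0:ℝ)))
    rw [Set.compl_Iic, hIic0, zero_add, huniv] at hc
    simp [hSdef, hc]
  have hSxpos : 0 < S x := ENNReal.toReal_pos hsupp (hfin _)
  have hh0 : 0 ≤ h := div_nonneg (hf x) hSxpos.le
  have hSanti : ∀ a b : ℝ, a ≤ b → S b ≤ S a := fun a b hab =>
    ENNReal.toReal_mono (hfin _) (measure_mono (Set.Ioi_subset_Ioi hab))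
  have hfb : ∀ t, t ≤ x → f t ≤ h * S t := by
    intro t ht
    have hne : μ (Set.Ioi t) ≠ 0 := fun h0 =>
      hsupp (measure_mono_null (Set.Ioi_subset_Ioi ht) h0)
    have hSt : 0 < S t := ENNReal.toReal_pos hne (hfin _)
    have := hmhr t x ht hsupp
    rw [div_le_iff₀ hSt] at this
    linarith [this]
  -- one-step Gronwall inequality
  have hstep : ∀ a b : ℝ, a ≤ b → b ≤ x → S a * (1 - h * (b - a)) ≤ S b := by
    intro a b hab hbx
    have hmeas : μ (Set.Ioc a b) ≤ ENNReal.ofReal (h * S a) * ENNReal.ofReal (b - a) := by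
      rw [hdens, withDensity_apply _ measurableSet_Ioc]
      calc ∫⁻ t in Set.Ioc a b, ENNReal.ofReal (f t) ∂volume
          ≤ ∫⁻ _ in Set.Ioc a b, ENNReal.ofReal (h * S a) ∂volume := by
            refine lintegral_mono_ae ?_
            filter_upwards [ae_restrict_mem measurableSet_Ioc] with t ht
            refine ENNReal.ofReal_le_ofReal ?_
            calc f t ≤ h * S t := hfb t (ht.2.trans hbx)
              _ ≤ h * S a := mul_le_mul_of_nonneg_left (hSanti a t ht.1.le) hh0
        _ = ENNReal.ofReal (h * S a) * volume (Set.Ioc a b) := by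
            rw [setLIntegral_const]
        _ = _ := by rw [Real.volume_Ioc]
    have hadd : μ (Set.Ioi a) = μ (Set.Ioc a b) + μ (Set.Ioi b) := by
      rw [← Set.Ioc_union_Ioi_eq_Ioi hab,
        measure_union (Set.Ioc_disjoint_Ioi le_rfl) measurableSet_Ioi]
    have h1 : S a = (μ (Set.Ioc a b)).toReal + S b := by
      have := congrArg ENNReal.toReal hadd
      rwa [ENNReal.toReal_add (hfin _) (hfin _)] at this
    have hSa : 0 ≤ S a := ENNReal.toReal_nonneg
    have h2 : (μ (Set.Ioc a b)).toReal ≤ h * S a * (b - a) := by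
      have h3 := ENNReal.toReal_mono (by finiteness) hmeas
      rwa [ENNReal.toReal_mul, ENNReal.toReal_ofReal (by positivity),
        ENNReal.toReal_ofReal (by linarith)] at h3
    nlinarith [h1, h2]
  -- iterated inequality
  have hiter : ∀ n : ℕ, 1 ≤ n → 0 ≤ 1 - h * x / n → (1 - h * x / n) ^ n ≤ S x := by
    intro n hn hc
    have hn0 : (0:ℝ) < n := by exact_mod_cast hn
    have key : ∀ k : ℕ, k ≤ n → (1 - h * x / n) ^ k ≤ S ((k : ℝ) * x / n) := by
      intro k
      induction k with
      | zero => intro _; simp [hS0]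
      | succ k ih =>
        intro hk
        have hk' := ih (Nat.le_of_succ_le hk)
        have hle : (k : ℝ) * x / n ≤ ((k + 1 : ℕ) : ℝ) * x / n := by
          push_cast
          rw [mul_div_assoc, mul_div_assoc]
          nlinarith [div_nonneg hx.le hn0.le]
        have hbx : ((k + 1 : ℕ) : ℝ) * x / n ≤ x := by
          rw [div_le_iff₀ hn0]
          have hkn : ((k + 1 : ℕ) : ℝ) ≤ n := by exact_mod_cast hk
          nlinarith [hx.le]
        have h3 := hstep _ _ hle hbx
        have h4 : ((k + 1 : ℕ) : ℝ) * x / n - (k : ℝ) * x / n = x / n := by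
          push_cast; ring
        rw [h4] at h3
        calc (1 - h * x / n) ^ (k + 1) = (1 - h * x / n) ^ k * (1 - h * x / n) :=
              pow_succ _ _
          _ ≤ S ((k : ℝ) * x / n) * (1 - h * x / n) :=
              mul_le_mul_of_nonneg_right hk' hc
          _ = S ((k : ℝ) * x / n) * (1 - h * (x / n)) := by ring_nf
          _ ≤ S (((k + 1 : ℕ) : ℝ) * x / n) := h3
    have h8 := key n le_rfl
    rw [show ((n:ℝ) * x / n) = x from by field_simp] at h8
    exact h8
  -- exponential bound via limit
  have hexp : Real.exp (-(h * x)) ≤ S x := by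
    have ht := Real.tendsto_one_add_div_pow_exp (-(h * x))
    refine le_of_tendsto ht ?_
    filter_upwards [Filter.eventually_ge_atTop (⌈h * x⌉₊ + 1)] with n hn
    have hn1 : 1 ≤ n := le_trans (Nat.le_add_left 1 _) hn
    have hn0 : (0:ℝ) < n := by exact_mod_cast hn1
    have hhx : h * x ≤ n := by
      calc h * x ≤ (⌈h * x⌉₊ : ℝ) := Nat.le_ceil _
        _ ≤ n := by exact_mod_cast le_trans (Nat.le_succ _) hn
    have hc : 0 ≤ 1 - h * x / n := by
      rw [sub_nonneg, div_le_one hn0]; exact hhx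
    have heq : (1 + -(h * x) / n : ℝ) = 1 - h * x / n := by ring
    rw [heq]
    exact hiter n hn1 hc
  -- quantile implies F(x) ≥ q
  have hA : {v : ℝ | q ≤ (μ (Set.Iic v)).toReal}.Nonempty := by
    have ht : Filter.Tendsto (fun v => (μ (Set.Iic v)).toReal) Filter.atTop (nhds 1) := by
      have h1 := tendsto_measure_Iic_atTop μ
      rw [huniv] at h1
      have h2 := (ENNReal.tendsto_toReal (by simp : (1:ℝ≥0∞) ≠ ⊤)).comp h1
      exact h2
    have := ht.eventually (eventually_ge_nhds hq1)
    obtain ⟨v, hv⟩ := this.exists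
    exact ⟨v, hv⟩
  have hFy : ∀ y, x < y → ENNReal.ofReal q ≤ μ (Set.Iic y) := by
    intro y hy
    have hquant' : sInf {v : ℝ | q ≤ (μ (Set.Iic v)).toReal} ≤ x := hquant
    obtain ⟨v, hv, hvy⟩ := exists_lt_of_csInf_lt hA (lt_of_le_of_lt hquant' hy)
    have : q ≤ (μ (Set.Iic y)).toReal :=
      le_trans hv (ENNReal.toReal_mono (hfin _) (measure_mono (Set.Iic_subset_Iic.mpr hvy.le)))
    exact ENNReal.ofReal_le_of_le_toReal this
  have hFx : ENNReal.ofReal q ≤ μ (Set.Iic x) := by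
    have hanti : Antitone (fun n : ℕ => Set.Iic (x + 1 / (n + 1))) := by
      intro m n hmn
      apply Set.Iic_subset_Iic.mpr
      have h5 : (1:ℝ) / (n + 1) ≤ 1 / (m + 1) := by
        apply one_div_le_one_div_of_le (by positivity)
        exact_mod_cast Nat.succ_le_succ hmn
      linarith
    have hseq := tendsto_measure_iInter_atTop
      (fun n : ℕ => (measurableSet_Iic (a := x + 1 / (n + 1))).nullMeasurableSet)
      hanti ⟨0, hfin _⟩
    have hiInter : (⋂ n : ℕ, Set.Iic (x + 1 / ((n : ℝ) + 1))) = Set.Iic x := by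
      ext y
      simp only [Set.mem_iInter, Set.mem_Iic]
      constructor
      · intro hy
        by_contra hxy
        push_neg at hxy
        obtain ⟨n, hn⟩ := exists_nat_one_div_lt (sub_pos.mpr hxy)
        exact absurd (hy n) (by linarith)
      · intro hy n
        have : (0:ℝ) < 1 / ((n:ℝ) + 1) := by positivity
        linarith
    rw [hiInter] at hseq
    refine ge_of_tendsto' hseq fun n => hFy _ ?_
    have : (0:ℝ) < 1 / ((n:ℝ) + 1) := by positivity
    linarith
  have hSx_le : S x ≤ 1 - q := by
    have hcompl : μ (Set.Ioi x) = 1 - μ (Set.Iic x) := by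
      rw [← huniv, ← Set.compl_Iic]
      exact measure_compl measurableSet_Iic (hfin _)
    have h6 : μ (Set.Ioi x) ≤ 1 - ENNReal.ofReal q := by
      rw [hcompl]; exact tsub_le_tsub_left hFx 1
    have h7 := ENNReal.toReal_mono (by finiteness) h6
    rw [ENNReal.toReal_sub_of_le (ENNReal.ofReal_le_one.mpr hq1.le) (by simp)] at h7
    simpa [ENNReal.toReal_ofReal hq0.le] using h7
  have hfinal : Real.exp (-(h * x)) ≤ 1 - q := hexp.trans hSx_le
  have hlog : -(h * x) ≤ Real.log (1 - q) :=
    (Real.le_log_iff_exp_le (by linarith)).mpr hfinal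
  rw [div_le_iff₀ hx]
  linarith
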